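/- Let Y be a closed subspace of the real space c₀ that is δ-null, i.e. the norms of the restricted coordinate functionals satisfy ‖δₙ|_Y‖ → 0 as n → ∞, where δₙ(x) = x(n). Then every continuous linear operator T : Y → Y admits a continuous linear extension S : c₀ → c₀ with S y = T y for all y ∈ Y and ‖S‖ = ‖T‖. In particular (since every finite-dimensional subspace of c₀ is δ-null), c₀ has the finite self-extension property. -/

import Mathlib

open Filter
open scoped ENNReal

/-- The space `c₀` of real sequences converging to `0`, as a subspace of `ℓ∞` (so it carries
the supremum norm). -/
noncomputable def c0 : Submodule ℝ (lp (fun _ : ℕ => ℝ) ∞) where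
  carrier := {x | Tendsto (fun n => x n) atTop (nhds 0)}
  add_mem' := by
    intro a b ha hb
    simpa [lp.coeFn_add] using ha.add hb
  zero_mem' := by
    simp [lp.coeFn_zero, tendsto_const_nhds]
  smul_mem' := by
    intro c x hx
    simpa [lp.coeFn_smul, smul_eq_mul] using hx.const_mul c

/-- The `n`-th coordinate evaluation functional `δₙ` on `c₀`. -/
noncomputable def c0delta (n : ℕ) : c0 →L[ℝ] ℝ :=
  LinearMap.mkContinuous
    { toFun := fun y => (y : lp (fun _ : ℕ => ℝ) ∞) n
      map_add' := by intro a b; simp [lp.coeFn_add]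
      map_smul' := by intro c a; simp [lp.coeFn_smul]
    }
    1
    (fun y => by
      rw [one_mul]
      exact lp.norm_apply_le_norm ENNReal.top_ne_zero (y : lp (fun _ : ℕ => ℝ) ∞) n)

/-- A subspace `Y` of `c₀` is **`δ`-null** if the norms of the restricted coordinate
functionals `δₙ|_Y` tend to `0` as `n → ∞`. -/
def DeltaNull (Y : Submodule ℝ c0) : Prop :=
  Tendsto (fun n => ‖(c0delta n).comp Y.subtypeL‖) atTop (nhds 0)

/-- A Banach space `X` has the **finite self-extension property** if every continuous linear
operator on a finite-dimensional subspace of `X` extends to an operator on `X` with the same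
norm. -/
def FiniteSelfExt (X : Type*) [NormedAddCommGroup X] [NormedSpace ℝ X] : Prop :=
  ∀ (Y : Submodule ℝ X), FiniteDimensional ℝ Y → ∀ T : Y →L[ℝ] Y,
    ∃ S : X →L[ℝ] X, (∀ y : Y, S y = (T y : X)) ∧ ‖S‖ = ‖T‖

set_option maxHeartbeats 4000000
set_option synthInstance.maxHeartbeats 400000
section c0Aux

@[reducible] noncomputable def c0SubNormedSpace (Y : Submodule ℝ c0) :
    @NormedSpace ℝ Y (@NontriviallyNormedField.toNormedField ℝ
      (@DenselyNormedField.toNontriviallyNormedField ℝ Real.denselyNormedField))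
      (@Submodule.seminormedAddCommGroup ℝ c0 Real.instRing
        (@NormedAddCommGroup.toSeminormedAddCommGroup c0
          (@AddSubgroupClass.normedAddCommGroup _ _ _ _
            (@Submodule.addSubgroupClass ℝ _
              (@NormedRing.toRing ℝ (@NormedCommRing.toNormedRing ℝ Real.normedCommRing)) _ _) c0)) _ Y) where
  norm_smul_le c x := norm_smul_le c ((x : c0) : lp (fun _ : ℕ => ℝ) ∞)

attribute [local instance] c0SubNormedSpace

lemma c0delta_restrict_norm_le (Y : Submodule ℝ c0) (n : ℕ) :
    ‖(c0delta n).comp Y.subtypeL‖ ≤ 1 := by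
  refine ContinuousLinearMap.opNorm_le_bound _ zero_le_one fun y => ?_
  rw [one_mul]
  exact lp.norm_apply_le_norm ENNReal.top_ne_zero ((y : c0) : lp (fun _ : ℕ => ℝ) ∞) n

lemma extension_main (Y : Submodule ℝ c0) (hY : DeltaNull Y) (T : Y →L[ℝ] Y) :
    ∃ S : c0 →L[ℝ] c0, (∀ y : Y, S y = (T y : c0)) ∧ ‖S‖ = ‖T‖ := by
  set g : ℕ → (Y →L[ℝ] ℝ) := fun n => ((c0delta n).comp Y.subtypeL).comp T with hg
  have hg_le : ∀ n, ‖g n‖ ≤ ‖T‖ := by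
    intro n
    calc ‖g n‖ ≤ ‖(c0delta n).comp Y.subtypeL‖ * ‖T‖ := ContinuousLinearMap.opNorm_comp_le _ _
    _ ≤ 1 * ‖T‖ := by
        exact mul_le_mul_of_nonneg_right (c0delta_restrict_norm_le Y n) (ContinuousLinearMap.opNorm_nonneg T)
    _ = ‖T‖ := one_mul _
  have hg0 : Tendsto (fun n => ‖g n‖) atTop (nhds 0) := by
    have h1 : Tendsto (fun n => ‖(c0delta n).comp Y.subtypeL‖ * ‖T‖) atTop (nhds 0) := by
      simpa using hY.mul_const ‖T‖
    exact squeeze_zero (fun n => ContinuousLinearMap.opNorm_nonneg _)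
      (fun n => ContinuousLinearMap.opNorm_comp_le _ _) h1
  choose f hfext hfnorm using fun n => exists_extension_norm_eq Y (g n)
  have hbound : ∀ (x : c0) (n : ℕ), ‖f n x‖ ≤ ‖T‖ * ‖x‖ := by
    intro x n
    calc ‖f n x‖ ≤ ‖f n‖ * ‖x‖ := (f n).le_opNorm x
    _ ≤ ‖T‖ * ‖x‖ := by
        rw [hfnorm n]; exact mul_le_mul_of_nonneg_right (hg_le n) (norm_nonneg x)
  have htend : ∀ x : c0, Tendsto (fun n => f n x) atTop (nhds 0) := by
    intro x
    have h1 : Tendsto (fun n => ‖g n‖ * ‖x‖) atTop (nhds 0) := by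
      simpa using hg0.mul_const ‖x‖
    refine squeeze_zero_norm (fun n => ?_) h1
    calc ‖f n x‖ ≤ ‖f n‖ * ‖x‖ := (f n).le_opNorm x
    _ = ‖g n‖ * ‖x‖ := by rw [hfnorm n]; rfl
  have hmem : ∀ x : c0, Memℓp (fun n => f n x) ∞ := by
    intro x
    apply memℓp_infty
    refine ⟨‖T‖ * ‖x‖, ?_⟩
    rintro r ⟨n, rfl⟩
    exact hbound x n
  set Sfun : c0 → c0 := fun x =>
    ⟨(⟨fun n => f n x, hmem x⟩ : lp (fun _ : ℕ => ℝ) ∞), htend x⟩ with hSfun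
  have hSapp : ∀ (x : c0) (n : ℕ), ((Sfun x : c0) : lp (fun _ : ℕ => ℝ) ∞) n = f n x := fun _ _ => rfl
  set SL : c0 →ₗ[ℝ] c0 :=
    { toFun := Sfun
      map_add' := by
        intro a b
        refine Subtype.ext (lp.ext (funext fun n => ?_))
        simp [hSapp, lp.coeFn_add]
      map_smul' := by
        intro c a
        refine Subtype.ext (lp.ext (funext fun n => ?_))
        simp [hSapp, lp.coeFn_smul] } with hSL
  have hSLnorm : ∀ x : c0, ‖SL x‖ ≤ ‖T‖ * ‖x‖ := by
    intro x
    refine lp.norm_le_of_forall_le (by positivity) fun n => ?_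
    exact hbound x n
  set S : c0 →L[ℝ] c0 := SL.mkContinuous ‖T‖ hSLnorm with hS
  have hext : ∀ y : Y, S y = (T y : c0) := by
    intro y
    refine Subtype.ext (lp.ext (funext fun n => ?_))
    have := hfext n y
    exact this
  refine ⟨S, hext, le_antisymm (SL.mkContinuous_norm_le (ContinuousLinearMap.opNorm_nonneg T) hSLnorm) ?_⟩
  refine T.opNorm_le_bound (ContinuousLinearMap.opNorm_nonneg S) fun y => ?_
  have h1 : ‖T y‖ = ‖S y‖ := by
    rw [hext y]; rfl
  refine (le_of_eq h1).trans ?_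
  exact S.le_opNorm y


lemma findim_deltaNull (Y : Submodule ℝ c0) (hfd : FiniteDimensional ℝ Y) : DeltaNull Y := by
  set dY : ℕ → (Y →L[ℝ] ℝ) := fun n => (c0delta n).comp Y.subtypeL with hdY
  let b := Module.finBasis ℝ Y
  set C : Fin (Module.finrank ℝ Y) → ℝ :=
    fun i => ‖LinearMap.toContinuousLinearMap (b.coord i)‖ with hCdef
  have hC : ∀ i, 0 ≤ C i := fun i => ContinuousLinearMap.opNorm_nonneg _
  have hrepr : ∀ (i) (y : Y), ‖b.repr y i‖ ≤ C i * ‖y‖ := by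
    intro i y
    have h := (LinearMap.toContinuousLinearMap (b.coord i)).le_opNorm y
    exact h
  have hbound : ∀ n, ‖dY n‖ ≤ ∑ i, C i * ‖dY n (b i)‖ := by
    intro n
    refine ContinuousLinearMap.opNorm_le_bound _
      (Finset.sum_nonneg fun i _ => mul_nonneg (hC i) (norm_nonneg _)) fun y => ?_
    have hy : dY n y = ∑ i, b.repr y i * dY n (b i) := by
      conv_lhs => rw [← b.sum_repr y]
      rw [map_sum]
      simp [smul_eq_mul]
    rw [hy, Finset.sum_mul]
    refine (norm_sum_le _ _).trans (Finset.sum_le_sum fun i _ => ?_)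
    rw [norm_mul]
    calc ‖b.repr y i‖ * ‖dY n (b i)‖ ≤ (C i * ‖y‖) * ‖dY n (b i)‖ :=
      mul_le_mul_of_nonneg_right (hrepr i y) (norm_nonneg _)
    _ = C i * ‖dY n (b i)‖ * ‖y‖ := by ring
  have htends : Tendsto (fun n => ∑ i, C i * ‖dY n (b i)‖) atTop (nhds 0) := by
    have h0 : (0 : ℝ) = ∑ _i : Fin (Module.finrank ℝ Y), (0:ℝ) := by simp
    rw [h0]
    refine tendsto_finset_sum _ fun i _ => ?_
    have h1 : Tendsto (fun n => ((b i : c0) : lp (fun _ : ℕ => ℝ) ∞) n) atTop (nhds 0) :=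
      (b i : c0).2
    have h2 := (h1.norm).const_mul (C i)
    rw [norm_zero, mul_zero] at h2
    exact h2
  exact squeeze_zero (fun n => ContinuousLinearMap.opNorm_nonneg _) hbound htends

end c0Aux


/-- Every continuous linear operator on a closed `δ`-null subspace of `c₀` extends to an
operator on `c₀` with the same norm; in particular (as every finite-dimensional subspace of
`c₀` is `δ`-null), `c₀` has the finite self-extension property. -/
theorem c0_deltaNull_extension :
    (∀ Y : Submodule ℝ c0, IsClosed (Y : Set c0) → DeltaNull Y → ∀ T : Y →L[ℝ] Y,
      ∃ S : c0 →L[ℝ] c0, (∀ y : Y, S y = (T y : c0)) ∧ ‖S‖ = ‖T‖) ∧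
    FiniteSelfExt c0 := by
  constructor
  · intro Y _hclosed hY T
    exact extension_main Y hY T
  · intro Y hfd T
    exact extension_main Y (findim_deltaNull Y hfd) T
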